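/- arXiv:2004.00462 — 4 statements merged into one kernel-verified Lean document; each statement's English description precedes it below -/
import Mathlib

section
/- If the vector-valued Hardy-Littlewood maximal operator satisfies the strong L^p bound ‖(∑_j (M f_j)^r)^{1/r}‖_p ≤ C ‖(∑_j f_j^r)^{1/r}‖_p for sequences of functions on ℝ (1 < r, p < ∞), then for any measure-preserving transformation τ of a probability space (X, μ), the ergodic maximal operator M♯f(x) = sup_n (1/n) ∑_{k=0}^{n-1} |f(τ^k x)| satisfies the same vector-valued strong L^p bound with the same constant: ‖(∑_j (M♯ f_j)^r)^{1/r}‖_{L^p(X)} ≤ C ‖(∑_j |f_j|^r)^{1/r}‖_{L^p(X)}. -/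
open MeasureTheory ENNReal

/-- The ergodic maximal function: `M♯ f x = sup_{n ≥ 1} (1/n) ∑_{k<n} |f(τ^k x)|`. -/
noncomputable def ergMax {X : Type*} (τ : X → X) (f : X → ℝ) (x : X) : ℝ≥0∞ :=
  ⨆ n : ℕ, (∑ k ∈ Finset.range (n + 1), ENNReal.ofReal |f (τ^[k] x)|) / (n + 1)

/-- The Hardy–Littlewood maximal function on `ℝ`:
`Mf(t) = sup over intervals I containing t of (1/|I|) ∫_I |f|`. -/
noncomputable def hlMax (f : ℝ → ℝ) (t : ℝ) : ℝ≥0∞ :=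
  ⨆ (a : ℝ) (b : ℝ) (_ : a ≤ t) (_ : t ≤ b) (_ : a < b),
    (∫⁻ y in Set.Icc a b, ENNReal.ofReal |f y|) / ENNReal.ofReal (b - a)

/-- Integral of a step function constant on integer intervals. -/
lemma stepInt (w : ℤ → ℝ≥0∞) (a : ℤ) (n : ℕ) :
    ∫⁻ y in Set.Ico (a : ℝ) ((a : ℝ) + n), w ⌊y⌋ = ∑ k ∈ Finset.range n, w (a + k) := by
  induction n with
  | zero => simp
  | succ n ih =>
    have h1 : (a : ℝ) ≤ (a : ℝ) + n := by linarith [Nat.cast_nonneg (α := ℝ) n]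
    have hc : ((n : ℝ) + 1) = ((n + 1 : ℕ) : ℝ) := by push_cast; ring
    rw [← hc, ← add_assoc, ← Set.Ico_union_Ico_eq_Ico h1 (by linarith),
      lintegral_union measurableSet_Ico Set.Ico_disjoint_Ico_same, ih,
      Finset.sum_range_succ]
    congr 1
    have hfl : ∀ y ∈ Set.Ico ((a : ℝ) + n) ((a : ℝ) + n + 1), w ⌊y⌋ = w (a + n) := by
      intro y hy
      congr 1
      rw [Int.floor_eq_iff]
      constructor
      · push_cast; exact hy.1
      · push_cast; exact hy.2
    rw [setLIntegral_congr_fun measurableSet_Ico hfl]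
    simp [Real.volume_Ico]

lemma le_hlMax (u : ℝ → ℝ) {t a b : ℝ} (hat : a ≤ t) (htb : t ≤ b) (hab : a < b) :
    (∫⁻ y in Set.Icc a b, ENNReal.ofReal |u y|) / ENNReal.ofReal (b - a) ≤ hlMax u t :=
  le_iSup_of_le a (le_iSup_of_le b (le_iSup_of_le hat (le_iSup_of_le htb
    (le_iSup_of_le hab le_rfl))))

lemma iSup_rpow' {u : ℕ → ℝ≥0∞} {c : ℝ} (hc : 0 < c) :
    (⨆ n, u n) ^ c = ⨆ n, u n ^ c := by
  refine le_antisymm ?_ (iSup_le fun n => ENNReal.rpow_le_rpow (le_iSup u n) hc.le)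
  have h : ∀ n, u n ≤ (⨆ m, u m ^ c) ^ (1 / c) := fun n => by
    calc u n = (u n ^ c) ^ (1 / c) := by
          rw [← ENNReal.rpow_mul, mul_one_div_cancel hc.ne', ENNReal.rpow_one]
      _ ≤ _ := ENNReal.rpow_le_rpow (le_iSup (fun m => u m ^ c) n) (by positivity)
  calc (⨆ n, u n) ^ c ≤ (((⨆ m, u m ^ c) ^ (1 / c)) : ℝ≥0∞) ^ c :=
        ENNReal.rpow_le_rpow (iSup_le h) hc.le
    _ = ⨆ m, u m ^ c := by
        rw [← ENNReal.rpow_mul, one_div_mul_cancel hc.ne', ENNReal.rpow_one]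

lemma tsum_iSup_swap {g : ℕ → ℕ → ℝ≥0∞} (hg : Monotone g) :
    ∑' j, ⨆ N, g N j = ⨆ N, ∑' j, g N j := by
  simp_rw [← MeasureTheory.lintegral_count]
  exact (lintegral_iSup (fun n => measurable_of_countable _) hg)

lemma limstep {a b : ℝ≥0∞} (K : ℕ) (h : ∀ L : ℕ, (L : ℝ≥0∞) * a ≤ ((L : ℝ≥0∞) + K) * b) :
    a ≤ b := by
  by_cases hb : b = ∞
  · simp [hb]
  have hbt : b < ∞ := lt_top_iff_ne_top.mpr hb
  apply ENNReal.le_of_forall_pos_le_add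
  intro ε hε _
  have hKb : (K : ℝ≥0∞) * b ≠ ∞ := ENNReal.mul_ne_top (ENNReal.natCast_ne_top K) hb
  have hεne : (ε : ℝ≥0∞) ≠ 0 := by exact_mod_cast hε.ne'
  obtain ⟨n, hn⟩ := ENNReal.exists_nat_gt (r := (K : ℝ≥0∞) * b / ε)
    (ENNReal.div_lt_top hKb hεne).ne
  have hn0 : (n : ℝ≥0∞) ≠ 0 := by
    rintro h0
    rw [h0] at hn
    exact (not_lt_of_ge zero_le) hn
  have hKbn : (K : ℝ≥0∞) * b / n ≤ ε := by
    rw [ENNReal.div_le_iff hn0 (ENNReal.natCast_ne_top n)]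
    calc (K : ℝ≥0∞) * b = (K : ℝ≥0∞) * b / ε * ε := by
          rw [ENNReal.div_mul_cancel (by exact_mod_cast hε.ne') ENNReal.coe_ne_top]
      _ ≤ n * ε := mul_le_mul_left hn.le ε
      _ = ε * n := mul_comm _ _
  have cancel : ∀ c : ℝ≥0∞, (n : ℝ≥0∞) * c / n = c := fun c => by
    rw [mul_comm, mul_div_assoc, ENNReal.div_self hn0 (ENNReal.natCast_ne_top n), mul_one]
  calc a = (n : ℝ≥0∞) * a / n := (cancel a).symm
    _ ≤ ((n : ℝ≥0∞) + K) * b / n := ENNReal.div_le_div_right (h n) _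
    _ = ((n : ℝ≥0∞) * b + (K : ℝ≥0∞) * b) / n := by ring_nf
    _ = (n : ℝ≥0∞) * b / n + (K : ℝ≥0∞) * b / n := ENNReal.add_div
    _ = b + (K : ℝ≥0∞) * b / n := by
        rw [cancel b]
    _ ≤ b + ε := add_le_add_right hKbn b

noncomputable def eAvg {X : Type*} (τ : X → X) (f : X → ℝ) (n : ℕ) (y : X) : ℝ≥0∞ :=
  (∑ k ∈ Finset.range (n + 1), ENNReal.ofReal |f (τ^[k] y)|) / (n + 1)

noncomputable def eMaxN {X : Type*} (τ : X → X) (f : X → ℝ) (N : ℕ) (y : X) : ℝ≥0∞ :=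
  ⨆ n ∈ Finset.range (N + 1), eAvg τ f n y

lemma eAvg_le_eMaxN {X : Type*} (τ : X → X) (f : X → ℝ) {n N : ℕ} (h : n ≤ N) (y : X) :
    eAvg τ f n y ≤ eMaxN τ f N y :=
  le_iSup₂_of_le n (Finset.mem_range.mpr (Nat.lt_succ_of_le h)) le_rfl

lemma eMaxN_mono {X : Type*} (τ : X → X) (f : X → ℝ) (y : X) :
    Monotone fun N => eMaxN τ f N y := fun N M hNM => by
  refine iSup₂_le fun n hn => ?_
  exact eAvg_le_eMaxN τ f (by have := Finset.mem_range.mp hn; omega) y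

lemma iSup_eMaxN {X : Type*} (τ : X → X) (f : X → ℝ) (y : X) :
    ⨆ N, eMaxN τ f N y = ergMax τ f y := by
  have he : ergMax τ f y = ⨆ n, eAvg τ f n y := rfl
  rw [he]
  refine le_antisymm (iSup_le fun N => iSup₂_le fun n _ => le_iSup (fun n => eAvg τ f n y) n) ?_
  exact iSup_le fun n => le_iSup_of_le n (eAvg_le_eMaxN τ f le_rfl y)

lemma measurable_eAvg {X : Type*} [MeasurableSpace X] {τ : X → X} (hτ : Measurable τ)
    {f : X → ℝ} (hf : Measurable f) (n : ℕ) : Measurable (eAvg τ f n) := by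
  apply Measurable.div _ measurable_const
  exact Finset.measurable_sum _ fun k _ =>
    ((hf.comp (hτ.iterate k)).abs).ennreal_ofReal

lemma measurable_eMaxN {X : Type*} [MeasurableSpace X] {τ : X → X} (hτ : Measurable τ)
    {f : X → ℝ} (hf : Measurable f) (N : ℕ) : Measurable (eMaxN τ f N) :=
  Measurable.biSup _ (Set.to_countable _) fun n _ => measurable_eAvg hτ hf n

lemma key_transfer {X : Type*} [MeasurableSpace X] {r p : ℝ} (hr : 1 < r) (hp : 1 < p)
    {C : ℝ}
    (hyp : ∀ f : ℕ → ℝ → ℝ, (∀ j, Measurable (f j)) →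
      (∫⁻ t, (∑' j, hlMax (f j) t ^ r) ^ (p / r)) ^ (1 / p)
        ≤ ENNReal.ofReal C * (∫⁻ t, (∑' j, ENNReal.ofReal |f j t| ^ r) ^ (p / r)) ^ (1 / p))
    (τ : X → X) (f : ℕ → X → ℝ) (x : X) (N L : ℕ) :
    ∑ m ∈ Finset.range L, (∑' j, eMaxN τ (f j) N (τ^[m] x) ^ r) ^ (p / r)
      ≤ ENNReal.ofReal C ^ p *
        ∑ m ∈ Finset.range (L + N + 1), (∑' j, ENNReal.ofReal |f j (τ^[m] x)| ^ r) ^ (p / r) := by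
  have hp0 : (0:ℝ) < p := lt_trans one_pos hp
  have hr0 : (0:ℝ) < r := lt_trans one_pos hr
  have hpr : (0:ℝ) < p / r := div_pos hp0 hr0
  set M := L + N + 1 with hM
  set v : ℕ → ℤ → ℝ := fun j k => if 0 ≤ k ∧ k < (M : ℤ) then f j (τ^[k.toNat] x) else 0 with hv
  set u : ℕ → ℝ → ℝ := fun j t => v j ⌊t⌋ with hu
  have hum : ∀ j, Measurable (u j) := fun j =>
    (measurable_of_countable (v j)).comp Int.measurable_floor
  have H := hyp u hum
  have Hp : (∫⁻ t, (∑' j, hlMax (u j) t ^ r) ^ (p / r))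
      ≤ ENNReal.ofReal C ^ p * ∫⁻ t, (∑' j, ENNReal.ofReal |u j t| ^ r) ^ (p / r) := by
    have h2 := ENNReal.rpow_le_rpow H hp0.le
    rwa [← ENNReal.rpow_mul, one_div_mul_cancel hp0.ne', ENNReal.rpow_one,
      ENNReal.mul_rpow_of_nonneg _ _ hp0.le,
      ← ENNReal.rpow_mul, one_div_mul_cancel hp0.ne', ENNReal.rpow_one] at h2
  have hR : (∫⁻ t, (∑' j, ENNReal.ofReal |u j t| ^ r) ^ (p / r))
      = ∑ m ∈ Finset.range M, (∑' j, ENNReal.ofReal |f j (τ^[m] x)| ^ r) ^ (p / r) := by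
    set W : ℤ → ℝ≥0∞ := fun k => (∑' j, ENNReal.ofReal |v j k| ^ r) ^ (p / r) with hW
    have hWzero : ∀ k : ℤ, ¬(0 ≤ k ∧ k < (M:ℤ)) → W k = 0 := by
      intro k hk
      simp only [hW, hv, if_neg hk, abs_zero, ENNReal.ofReal_zero,
        ENNReal.zero_rpow_of_pos hr0, tsum_zero, ENNReal.zero_rpow_of_pos hpr]
    have hind : ∀ t : ℝ, (∑' j, ENNReal.ofReal |u j t| ^ r) ^ (p / r)
        = (Set.Ico (0:ℝ) (M:ℝ)).indicator (fun t => W ⌊t⌋) t := by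
      intro t
      by_cases ht : t ∈ Set.Ico (0:ℝ) (M:ℝ)
      · rw [Set.indicator_of_mem ht]
      · rw [Set.indicator_of_notMem ht]
        show W ⌊t⌋ = 0
        apply hWzero
        rintro ⟨h0, h1⟩
        apply ht
        constructor
        · calc (0:ℝ) ≤ (⌊t⌋ : ℝ) := by exact_mod_cast h0
            _ ≤ t := Int.floor_le t
        · have h2 : (⌊t⌋ : ℤ) + 1 ≤ (M:ℤ) := h1
          calc t < (⌊t⌋ : ℝ) + 1 := Int.lt_floor_add_one t
            _ ≤ (M:ℝ) := by exact_mod_cast h2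
    calc (∫⁻ t, (∑' j, ENNReal.ofReal |u j t| ^ r) ^ (p / r))
        = ∫⁻ t, (Set.Ico (0:ℝ) (M:ℝ)).indicator (fun t => W ⌊t⌋) t := lintegral_congr hind
      _ = ∫⁻ t in Set.Ico (0:ℝ) (M:ℝ), W ⌊t⌋ := lintegral_indicator measurableSet_Ico _
      _ = ∑ k ∈ Finset.range M, W ((0:ℤ) + k) := by simpa using stepInt W 0 M
      _ = ∑ m ∈ Finset.range M, (∑' j, ENNReal.ofReal |f j (τ^[m] x)| ^ r) ^ (p / r) := by
          refine Finset.sum_congr rfl fun m hm => ?_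
          have hmM := Finset.mem_range.mp hm
          simp only [hW, hv, zero_add]
          refine congrArg (· ^ (p / r)) (tsum_congr fun j => ?_)
          rw [if_pos ⟨Int.natCast_nonneg m, by exact_mod_cast hmM⟩]
          simp
  have hLb : ∑ m ∈ Finset.range L, (∑' j, eMaxN τ (f j) N (τ^[m] x) ^ r) ^ (p / r)
      ≤ ∫⁻ t, (∑' j, hlMax (u j) t ^ r) ^ (p / r) := by
    set G' : ℤ → ℝ≥0∞ := fun k => if 0 ≤ k ∧ k < (L:ℤ) then
        (∑' j, eMaxN τ (f j) N (τ^[k.toNat] x) ^ r) ^ (p / r) else 0 with hG'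
    have step1 : ∑ m ∈ Finset.range L, (∑' j, eMaxN τ (f j) N (τ^[m] x) ^ r) ^ (p / r)
        = ∫⁻ t in Set.Ico (0:ℝ) (L:ℝ), G' ⌊t⌋ := by
      have e1 := stepInt G' 0 L
      simp only [Int.cast_zero, zero_add] at e1
      rw [e1]
      refine Finset.sum_congr rfl fun m hm => ?_
      have hmL := Finset.mem_range.mp hm
      simp only [hG']
      rw [if_pos ⟨Int.natCast_nonneg m, by exact_mod_cast hmL⟩]
      simp
    rw [step1]
    refine le_trans (setLIntegral_le_lintegral _ _) (lintegral_mono fun t => ?_)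
    by_cases h : 0 ≤ ⌊t⌋ ∧ ⌊t⌋ < (L:ℤ)
    · set m := ⌊t⌋.toNat with hm
      have hmf : (⌊t⌋ : ℤ) = (m:ℤ) := (Int.toNat_of_nonneg h.1).symm
      have hmL : m < L := by
        have : (m:ℤ) < (L:ℤ) := hmf ▸ h.2
        exact_mod_cast this
      have hmt : (m:ℝ) ≤ t := by
        have := Int.floor_le t
        rw [hmf] at this
        exact_mod_cast this
      have htm : t < (m:ℝ) + 1 := by
        have := Int.lt_floor_add_one t
        rw [hmf] at this
        exact_mod_cast this
      simp only [hG', if_pos h, ← hm]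
      apply ENNReal.rpow_le_rpow _ hpr.le
      refine ENNReal.tsum_le_tsum fun j => ENNReal.rpow_le_rpow ?_ hr0.le
      refine iSup₂_le fun n hn => ?_
      have hnN : n ≤ N := by
        have := Finset.mem_range.mp hn
        omega
      have hab : (m:ℝ) < (m:ℝ) + ((n:ℝ)+1) := by
        have : (0:ℝ) ≤ (n:ℝ) := Nat.cast_nonneg n
        linarith
      refine le_trans ?_ (le_hlMax (u j) hmt (by linarith) hab)
      have hba : ENNReal.ofReal ((m:ℝ) + ((n:ℝ)+1) - m) = (n:ℝ≥0∞) + 1 := by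
        rw [show (m:ℝ) + ((n:ℝ)+1) - m = ((n+1:ℕ):ℝ) by push_cast; ring,
          ENNReal.ofReal_natCast]
        norm_cast
      rw [hba]
      unfold eAvg
      apply ENNReal.div_le_div_right
      have hIco : (∫⁻ y in Set.Ico ((m:ℝ)) ((m:ℝ) + ((n:ℝ)+1)), ENNReal.ofReal |u j y|)
          = ∑ k ∈ Finset.range (n+1), ENNReal.ofReal |v j ((m:ℤ) + k)| := by
        have := stepInt (fun k => ENNReal.ofReal |v j k|) (m:ℤ) (n+1)
        rw [show ((((m:ℤ)):ℝ) + ((n+1:ℕ):ℝ)) = (m:ℝ) + ((n:ℝ)+1) by push_cast; ring] at this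
        rw [show (((m:ℤ)):ℝ) = (m:ℝ) by push_cast; ring] at this
        exact this
      calc (∑ k ∈ Finset.range (n + 1), ENNReal.ofReal |f j (τ^[k] (τ^[m] x))|)
          = ∑ k ∈ Finset.range (n+1), ENNReal.ofReal |v j ((m:ℤ) + k)| := by
            refine Finset.sum_congr rfl fun k hk => ?_
            have hkn := Finset.mem_range.mp hk
            have hvv : v j ((m:ℤ) + k) = f j (τ^[m + k] x) := by
              simp only [hv]
              rw [if_pos ⟨by positivity, by
                  push_cast
                  omega⟩]
              have htn : ((m:ℤ) + (k:ℤ)).toNat = m + k := by omega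
              rw [htn]
            rw [hvv, ← Function.iterate_add_apply, Nat.add_comm k m]
        _ = ∫⁻ y in Set.Ico ((m:ℝ)) ((m:ℝ) + ((n:ℝ)+1)), ENNReal.ofReal |u j y| := hIco.symm
        _ ≤ ∫⁻ y in Set.Icc ((m:ℝ)) ((m:ℝ) + ((n:ℝ)+1)), ENNReal.ofReal |u j y| :=
            lintegral_mono_set Set.Ico_subset_Icc_self
    · simp only [hG', if_neg h]
      exact zero_le
  calc ∑ m ∈ Finset.range L, (∑' j, eMaxN τ (f j) N (τ^[m] x) ^ r) ^ (p / r)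
      ≤ ∫⁻ t, (∑' j, hlMax (u j) t ^ r) ^ (p / r) := hLb
    _ ≤ ENNReal.ofReal C ^ p * ∫⁻ t, (∑' j, ENNReal.ofReal |u j t| ^ r) ^ (p / r) := Hp
    _ = ENNReal.ofReal C ^ p *
        ∑ m ∈ Finset.range (L + N + 1), (∑' j, ENNReal.ofReal |f j (τ^[m] x)| ^ r) ^ (p / r) := by
          rw [hR]

lemma int_bound {X : Type*} [MeasurableSpace X] {r p : ℝ} (hr : 1 < r) (hp : 1 < p)
    {C : ℝ}
    (hyp : ∀ f : ℕ → ℝ → ℝ, (∀ j, Measurable (f j)) →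
      (∫⁻ t, (∑' j, hlMax (f j) t ^ r) ^ (p / r)) ^ (1 / p)
        ≤ ENNReal.ofReal C * (∫⁻ t, (∑' j, ENNReal.ofReal |f j t| ^ r) ^ (p / r)) ^ (1 / p))
    (μ : Measure X) [IsProbabilityMeasure μ]
    {τ : X → X} (hτ : MeasurePreserving τ μ μ)
    (f : ℕ → X → ℝ) (hf : ∀ j, Measurable (f j)) (N : ℕ) :
    ∫⁻ x, (∑' j, eMaxN τ (f j) N x ^ r) ^ (p / r) ∂μ
      ≤ ENNReal.ofReal C ^ p * ∫⁻ x, (∑' j, ENNReal.ofReal |f j x| ^ r) ^ (p / r) ∂μ := by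
  set G : X → ℝ≥0∞ := fun y => (∑' j, eMaxN τ (f j) N y ^ r) ^ (p / r) with hG
  set Hh : X → ℝ≥0∞ := fun y => (∑' j, ENNReal.ofReal |f j y| ^ r) ^ (p / r) with hH
  have hGm : Measurable G := (Measurable.ennreal_tsum fun j =>
    (measurable_eMaxN hτ.measurable (hf j) N).pow_const r).pow_const (p / r)
  have hHm : Measurable Hh := (Measurable.ennreal_tsum fun j =>
    ((hf j).abs.ennreal_ofReal).pow_const r).pow_const (p / r)
  apply limstep (N + 1)
  intro L
  have h1 : ∫⁻ x, ∑ m ∈ Finset.range L, G (τ^[m] x) ∂μ = (L : ℝ≥0∞) * ∫⁻ x, G x ∂μ := by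
    rw [lintegral_finset_sum (f := fun m x => G (τ^[m] x)) _
        (fun m _ => hGm.comp (hτ.measurable.iterate m)),
      Finset.sum_congr rfl (fun m _ => (hτ.iterate m).lintegral_comp hGm)]
    simp [Finset.sum_const, nsmul_eq_mul]
  have h2 : ∫⁻ x, ∑ m ∈ Finset.range (L + N + 1), Hh (τ^[m] x) ∂μ
      = ((L + N + 1 : ℕ) : ℝ≥0∞) * ∫⁻ x, Hh x ∂μ := by
    rw [lintegral_finset_sum (f := fun m x => Hh (τ^[m] x)) _
        (fun m _ => hHm.comp (hτ.measurable.iterate m)),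
      Finset.sum_congr rfl (fun m _ => (hτ.iterate m).lintegral_comp hHm)]
    simp [Finset.sum_const, nsmul_eq_mul]
  calc (L:ℝ≥0∞) * ∫⁻ x, G x ∂μ
      = ∫⁻ x, ∑ m ∈ Finset.range L, G (τ^[m] x) ∂μ := h1.symm
    _ ≤ ∫⁻ x, ENNReal.ofReal C ^ p * ∑ m ∈ Finset.range (L+N+1), Hh (τ^[m] x) ∂μ :=
        lintegral_mono fun x => key_transfer hr hp hyp τ f x N L
    _ = ENNReal.ofReal C ^ p * (((L + N + 1 : ℕ) : ℝ≥0∞) * ∫⁻ x, Hh x ∂μ) := by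
        rw [lintegral_const_mul (f := fun x => ∑ m ∈ Finset.range (L+N+1), Hh (τ^[m] x)) _
          (Finset.measurable_sum _ fun m _ => hHm.comp (hτ.measurable.iterate m)), h2]
    _ = ((L:ℝ≥0∞) + ((N + 1 : ℕ) : ℝ≥0∞)) * (ENNReal.ofReal C ^ p * ∫⁻ x, Hh x ∂μ) := by
        push_cast
        ring

theorem transfer_strong_type (r p : ℝ) (hr : 1 < r) (hp : 1 < p) (C : ℝ) (hC : 0 < C)
    (hyp : ∀ f : ℕ → ℝ → ℝ, (∀ j, Measurable (f j)) →
      (∫⁻ t, (∑' j, hlMax (f j) t ^ r) ^ (p / r)) ^ (1 / p)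
        ≤ ENNReal.ofReal C * (∫⁻ t, (∑' j, ENNReal.ofReal |f j t| ^ r) ^ (p / r)) ^ (1 / p))
    {X : Type*} [MeasurableSpace X] (μ : Measure X) [IsProbabilityMeasure μ]
    (τ : X → X) (hτ : MeasurePreserving τ μ μ)
    (f : ℕ → X → ℝ) (hf : ∀ j, Measurable (f j)) :
    (∫⁻ x, (∑' j, ergMax τ (f j) x ^ r) ^ (p / r) ∂μ) ^ (1 / p)
      ≤ ENNReal.ofReal C *
        (∫⁻ x, (∑' j, ENNReal.ofReal |f j x| ^ r) ^ (p / r) ∂μ) ^ (1 / p) := by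
  have hp0 : (0:ℝ) < p := lt_trans one_pos hp
  have hr0 : (0:ℝ) < r := lt_trans one_pos hr
  have hpr : (0:ℝ) < p / r := div_pos hp0 hr0
  have h1p : (0:ℝ) ≤ 1 / p := by positivity
  have hb : ∀ N, ∫⁻ x, (∑' j, eMaxN τ (f j) N x ^ r) ^ (p / r) ∂μ
      ≤ ENNReal.ofReal C ^ p * ∫⁻ x, (∑' j, ENNReal.ofReal |f j x| ^ r) ^ (p / r) ∂μ :=
    fun N => int_bound hr hp hyp μ hτ f hf N
  have hmono : Monotone (fun N => fun x : X => (∑' j, eMaxN τ (f j) N x ^ r) ^ (p / r)) :=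
    fun N M hNM => fun x => ENNReal.rpow_le_rpow (ENNReal.tsum_le_tsum fun j =>
      ENNReal.rpow_le_rpow (eMaxN_mono τ (f j) x hNM) hr0.le) hpr.le
  have hmeas : ∀ N, Measurable fun x : X => (∑' j, eMaxN τ (f j) N x ^ r) ^ (p / r) :=
    fun N => (Measurable.ennreal_tsum fun j =>
      (measurable_eMaxN hτ.measurable (hf j) N).pow_const r).pow_const (p / r)
  have hptw : ∀ x : X, (⨆ N, (∑' j, eMaxN τ (f j) N x ^ r) ^ (p / r))
      = (∑' j, ergMax τ (f j) x ^ r) ^ (p / r) := by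
    intro x
    rw [← iSup_rpow' hpr]
    congr 1
    rw [← tsum_iSup_swap (g := fun N j => eMaxN τ (f j) N x ^ r)
      (fun N M hNM j => ENNReal.rpow_le_rpow (eMaxN_mono τ (f j) x hNM) hr0.le)]
    exact tsum_congr fun j => by rw [← iSup_rpow' hr0, iSup_eMaxN]
  calc (∫⁻ x, (∑' j, ergMax τ (f j) x ^ r) ^ (p / r) ∂μ) ^ (1 / p)
      = (∫⁻ x, ⨆ N, (∑' j, eMaxN τ (f j) N x ^ r) ^ (p / r) ∂μ) ^ (1 / p) := by
        rw [lintegral_congr hptw]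
    _ = (⨆ N, ∫⁻ x, (∑' j, eMaxN τ (f j) N x ^ r) ^ (p / r) ∂μ) ^ (1 / p) := by
        rw [lintegral_iSup hmeas hmono]
    _ ≤ (ENNReal.ofReal C ^ p *
          ∫⁻ x, (∑' j, ENNReal.ofReal |f j x| ^ r) ^ (p / r) ∂μ) ^ (1 / p) :=
        ENNReal.rpow_le_rpow (iSup_le hb) h1p
    _ = ENNReal.ofReal C *
          (∫⁻ x, (∑' j, ENNReal.ofReal |f j x| ^ r) ^ (p / r) ∂μ) ^ (1 / p) := by
        rw [ENNReal.mul_rpow_of_nonneg _ _ h1p, ← ENNReal.rpow_mul,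
          mul_one_div_cancel hp0.ne', ENNReal.rpow_one]
end

section
/- If the vector-valued Hardy-Littlewood maximal operator satisfies the weak type (1,1) bound |{t ∈ ℝ : (∑_j (M f_j(t))^r)^{1/r} > λ}| ≤ (C/λ) ∫_ℝ (∑_j |f_j(t)|^r)^{1/r} dt for all λ > 0 (1 < r < ∞), then for any measure-preserving transformation τ of a probability space (X, μ), the ergodic maximal operator satisfies μ{x ∈ X : (∑_j (M♯ f_j(x))^r)^{1/r} > λ} ≤ (C/λ) ∫_X (∑_j |f_j(x)|^r)^{1/r} dμ for all λ > 0, with the same constant C. -/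
open MeasureTheory ENNReal

-- step function integral
lemma stepfun_lintegral (h : ℝ → ℝ≥0∞) (c : ℕ → ℝ≥0∞) :
    ∀ (n a : ℕ), (∀ k, k < n → ∀ t ∈ Set.Ico ((a + k : ℕ) : ℝ) ((a + k : ℕ) + 1), h t = c (a + k)) →
    ∫⁻ t in Set.Ico ((a : ℕ) : ℝ) ((a : ℝ) + n), h t = ∑ k ∈ Finset.range n, c (a + k) := by
  intro n
  induction n with
  | zero => intro a _; simp
  | succ n ih =>
    intro a hc
    have hsplit : Set.Ico ((a : ℝ)) ((a : ℝ) + (n + 1)) =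
        Set.Ico ((a : ℝ)) ((a : ℝ) + n) ∪ Set.Ico ((a : ℝ) + n) ((a : ℝ) + (n + 1)) := by
      rw [Set.Ico_union_Ico_eq_Ico (by linarith [Nat.cast_nonneg (α := ℝ) n]) (by linarith)]
    have hdisj : Disjoint (Set.Ico ((a : ℝ)) ((a : ℝ) + n))
        (Set.Ico ((a : ℝ) + n) ((a : ℝ) + (n + 1))) := Set.Ico_disjoint_Ico_same
    have hlast : ∫⁻ t in Set.Ico ((a : ℝ) + n) ((a : ℝ) + (n + 1)), h t = c (a + n) := by
      have heq : ∀ t ∈ Set.Ico ((a : ℝ) + n) ((a : ℝ) + (n + 1)), h t = c (a + n) := by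
        intro t ht
        exact hc n (Nat.lt_succ_self n) t (by push_cast; constructor <;> [exact ht.1; linarith [ht.2]])
      rw [setLIntegral_congr_fun measurableSet_Ico heq,
        setLIntegral_const, Real.volume_Ico]
      simp [show (a : ℝ) + (n + 1) - ((a : ℝ) + n) = 1 by ring]
    rw [show ((n + 1 : ℕ) : ℝ) = (n : ℝ) + 1 by push_cast; ring, hsplit,
      lintegral_union measurableSet_Ico hdisj,
      ih a (fun k hk t ht => hc k (hk.trans (Nat.lt_succ_self n)) t ht), hlast,
      Finset.sum_range_succ]

lemma limit_lemma (a b : ℝ≥0∞) (K : ℕ) (ha : a ≠ ∞) (hb : b ≠ ∞)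
    (h : ∀ L : ℕ, (L : ℝ≥0∞) * a ≤ ((L : ℝ≥0∞) + K) * b) : a ≤ b := by
  by_contra hab
  push_neg at hab
  set a' := a.toReal
  set b' := b.toReal
  have hb'a' : b' < a' := (ENNReal.toReal_lt_toReal hb ha).2 hab
  have hb0 : 0 ≤ b' := ENNReal.toReal_nonneg
  have hr : ∀ L : ℕ, (L : ℝ) * a' ≤ ((L : ℝ) + K) * b' := by
    intro L
    have := h L
    have h1 : ((L : ℝ≥0∞) * a).toReal ≤ (((L : ℝ≥0∞) + K) * b).toReal :=
      ENNReal.toReal_mono (by finiteness) this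
    rw [ENNReal.toReal_mul, ENNReal.toReal_mul,
      ENNReal.toReal_add (by finiteness) (by finiteness)] at h1
    simpa using h1
  set L : ℕ := ⌈(K : ℝ) * b' / (a' - b')⌉₊ + 1
  have hL : (K : ℝ) * b' / (a' - b') < L := by
    refine lt_of_le_of_lt (Nat.le_ceil _) ?_
    exact_mod_cast Nat.lt_succ_self _
  have hKb : (K : ℝ) * b' < L * (a' - b') := by
    rwa [div_lt_iff₀ (by linarith)] at hL
  have := hr L
  nlinarith

lemma rpow_iSup {ι : Sort*} (u : ι → ℝ≥0∞) {p : ℝ} (hp : 0 < p) :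
    (⨆ i, u i) ^ p = ⨆ i, u i ^ p := by
  have h := (ENNReal.orderIsoRpow p hp).to_galoisConnection.l_iSup (f := u)
  simp only [ENNReal.orderIsoRpow, StrictMono.orderIsoOfRightInverse_apply] at h
  exact h

lemma tsum_iSup_mono (v : ℕ → ℕ → ℝ≥0∞) (hv : Monotone v) :
    ∑' j, ⨆ N, v N j = ⨆ N, ∑' j, v N j := by
  calc ∑' j, ⨆ N, v N j = ∫⁻ j, ⨆ N, v N j ∂Measure.count := (lintegral_count _).symm
    _ = ⨆ N, ∫⁻ j, v N j ∂Measure.count :=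
        lintegral_iSup (fun N => measurable_from_nat) hv
    _ = ⨆ N, ∑' j, v N j := by simp [lintegral_count]

lemma unit_Ico_disjoint (i k : ℕ) (hik : i ≠ k) :
    Disjoint (Set.Ico ((i : ℝ)) ((i : ℝ) + 1)) (Set.Ico ((k : ℝ)) ((k : ℝ) + 1)) := by
  rw [Set.Ico_disjoint_Ico]
  rcases hik.lt_or_gt with h | h
  · have : (i : ℝ) + 1 ≤ k := by exact_mod_cast h
    exact le_trans (min_le_left _ _) (le_trans this (le_max_right _ _))
  · have : (k : ℝ) + 1 ≤ i := by exact_mod_cast h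
    exact le_trans (min_le_right _ _) (le_trans this (le_max_left _ _))

theorem transfer_weak_type (r : ℝ) (hr : 1 < r) (C : ℝ) (hC : 0 < C)
    (hyp : ∀ f : ℕ → ℝ → ℝ, (∀ j, Measurable (f j)) → ∀ lam : ℝ, 0 < lam →
      volume {t : ℝ | ENNReal.ofReal lam < (∑' j, hlMax (f j) t ^ r) ^ (1 / r)}
        ≤ (ENNReal.ofReal C / ENNReal.ofReal lam) *
            ∫⁻ t, (∑' j, ENNReal.ofReal |f j t| ^ r) ^ (1 / r))
    {X : Type*} [MeasurableSpace X] (μ : Measure X) [IsProbabilityMeasure μ]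
    (τ : X → X) (hτ : MeasurePreserving τ μ μ)
    (f : ℕ → X → ℝ) (hf : ∀ j, Measurable (f j)) (lam : ℝ) (hlam : 0 < lam) :
    μ {x : X | ENNReal.ofReal lam < (∑' j, ergMax τ (f j) x ^ r) ^ (1 / r)}
      ≤ (ENNReal.ofReal C / ENNReal.ofReal lam) *
          ∫⁻ x, (∑' j, ENNReal.ofReal |f j x| ^ r) ^ (1 / r) ∂μ := by
  classical
  have hr0 : (0 : ℝ) < r := lt_trans one_pos hr
  have hrinv : (0 : ℝ) < 1 / r := by positivity
  set c : ℝ≥0∞ := ENNReal.ofReal C / ENNReal.ofReal lam with hc_def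
  have hc_ne_top : c ≠ ∞ :=
    (ENNReal.div_lt_top ENNReal.ofReal_ne_top (ENNReal.ofReal_pos.2 hlam).ne').ne
  have hc_ne_zero : c ≠ 0 :=
    (ENNReal.div_pos (ENNReal.ofReal_pos.2 hC).ne' ENNReal.ofReal_ne_top).ne'
  set F : X → ℝ≥0∞ := fun y => (∑' j, ENNReal.ofReal |f j y| ^ r) ^ (1 / r) with hF_def
  have hFmeas : Measurable F := by
    apply Measurable.pow_const
    exact Measurable.ennreal_tsum fun j =>
      (((hf j).abs).ennreal_ofReal).pow_const r
  set I : ℝ≥0∞ := ∫⁻ y, F y ∂μ with hI_def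
  show μ _ ≤ c * I
  rcases eq_or_ne I ∞ with hI | hI
  · rw [hI, ENNReal.mul_top hc_ne_zero]
    exact le_top
  -- local definitions
  set avg : ℕ → ℕ → X → ℝ≥0∞ := fun n j y =>
    (∑ k ∈ Finset.range (n + 1), ENNReal.ofReal |f j (τ^[k] y)|) / (n + 1) with havg_def
  have havg_meas : ∀ n j, Measurable (avg n j) := by
    intro n j
    apply Measurable.div _ measurable_const
    exact Finset.measurable_sum _ fun k _ =>
      (((hf j).comp (hτ.measurable.iterate k)).abs).ennreal_ofReal
  have herg : ∀ j y, ergMax τ (f j) y = ⨆ n, avg n j y := fun j y => rfl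
  set S : ℕ → ℕ → X → ℝ≥0∞ := fun N j y => ⨆ n, ⨆ _ : n ≤ N, avg n j y with hS_def
  have hSmeas : ∀ N j, Measurable (S N j) :=
    fun N j => Measurable.iSup fun n => Measurable.iSup fun _ => havg_meas n j
  have hSmono : ∀ j y, Monotone fun N => S N j y := by
    intro j y N N' hNN'
    exact iSup₂_le fun n hn => le_iSup₂_of_le n (hn.trans hNN') le_rfl
  set TN : ℕ → X → ℝ≥0∞ := fun N y => (∑' j, S N j y ^ r) ^ (1 / r) with hTN_def
  have hTNmeas : ∀ N, Measurable (TN N) := fun N =>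
    (Measurable.ennreal_tsum fun j => (hSmeas N j).pow_const r).pow_const (1 / r)
  set E : ℕ → Set X := fun N => {y | ENNReal.ofReal lam < TN N y} with hE_def
  have hEmeas : ∀ N, MeasurableSet (E N) :=
    fun N => measurableSet_lt measurable_const (hTNmeas N)
  -- the key uniform estimate
  have key : ∀ N, μ (E N) ≤ c * I := by
    intro N
    apply limit_lemma _ _ (N + 1) (measure_ne_top μ _) (ENNReal.mul_ne_top hc_ne_top hI)
    intro L
    -- pointwise estimate
    have point : ∀ x : X,
        (∑ m ∈ Finset.range L, (E N).indicator (fun _ => (1 : ℝ≥0∞)) (τ^[m] x))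
          ≤ c * ∑ m ∈ Finset.range (L + N + 1), F (τ^[m] x) := by
      intro x
      set M : ℕ := L + N + 1 with hM
      set g : ℕ → ℝ → ℝ :=
        fun j => (Set.Ico (0 : ℝ) M).indicator (fun t => f j (τ^[⌊t⌋₊] x)) with hg_def
      have hgmeas : ∀ j, Measurable (g j) := by
        intro j
        have hbase : Measurable fun t : ℝ => f j (τ^[⌊t⌋₊] x) :=
          (measurable_from_nat (f := fun n => f j (τ^[n] x))).comp Nat.measurable_floor
        exact hbase.indicator measurableSet_Ico
      have hgval : ∀ j, ∀ m : ℕ, m < M → ∀ t ∈ Set.Ico ((m : ℝ)) ((m : ℝ) + 1),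
          g j t = f j (τ^[m] x) := by
        intro j m hm t ht
        have ht0 : (0 : ℝ) ≤ t := le_trans (Nat.cast_nonneg m) ht.1
        have hfl : ⌊t⌋₊ = m := (Nat.floor_eq_iff ht0).2 ⟨ht.1, ht.2⟩
        have htM : t ∈ Set.Ico (0 : ℝ) (M : ℝ) :=
          ⟨ht0, lt_of_lt_of_le ht.2 (by exact_mod_cast hm)⟩
        rw [hg_def]
        simp only [Set.indicator_of_mem htM, hfl]
      -- lower bound on hlMax over unit intervals
      have hlb : ∀ m : ℕ, m < L → τ^[m] x ∈ E N →
          Set.Ico ((m : ℝ)) ((m : ℝ) + 1) ⊆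
            {t : ℝ | ENNReal.ofReal lam < (∑' j, hlMax (g j) t ^ r) ^ (1 / r)} := by
        intro m hmL hmem t ht
        have hmain : ∀ j, S N j (τ^[m] x) ≤ hlMax (g j) t := by
          intro j
          refine iSup₂_le fun n hn => ?_
          have hstep : ∫⁻ y in Set.Ico ((m : ℝ)) ((m : ℝ) + ((n : ℝ) + 1)),
              ENNReal.ofReal |g j y|
              = ∑ k ∈ Finset.range (n + 1), ENNReal.ofReal |f j (τ^[m + k] x)| := by
            have := stepfun_lintegral (fun y => ENNReal.ofReal |g j y|)
              (fun i => ENNReal.ofReal |f j (τ^[i] x)|) (n + 1) m ?_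
            · rw [show ((m : ℝ) + ((n : ℝ) + 1)) = (m : ℝ) + ((n + 1 : ℕ) : ℝ) by push_cast; ring]
              exact this
            · intro k hk t' ht'
              have hkM : m + k < M := by omega
              have heq := hgval j (m + k) hkM t' (by push_cast at ht' ⊢; exact ht')
              show ENNReal.ofReal |g j t'| = ENNReal.ofReal |f j (τ^[m + k] x)|
              rw [heq]
          have hIcc : ∑ k ∈ Finset.range (n + 1), ENNReal.ofReal |f j (τ^[m + k] x)|
              ≤ ∫⁻ y in Set.Icc ((m : ℝ)) ((m : ℝ) + ((n : ℝ) + 1)),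
                  ENNReal.ofReal |g j y| := by
            rw [← hstep]
            exact lintegral_mono_set Set.Ico_subset_Icc_self
          have havg_eq : avg n j (τ^[m] x)
              = (∑ k ∈ Finset.range (n + 1), ENNReal.ofReal |f j (τ^[m + k] x)|)
                  / ((n : ℝ≥0∞) + 1) := by
            show (∑ k ∈ Finset.range (n + 1), ENNReal.ofReal |f j (τ^[k] (τ^[m] x))|)
                / ((n : ℝ≥0∞) + 1) = _
            congr 1
            refine Finset.sum_congr rfl fun k _ => ?_
            rw [← Function.iterate_add_apply, Nat.add_comm k m]
          have hden : ENNReal.ofReal (((m : ℝ) + ((n : ℝ) + 1)) - (m : ℝ))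
              = (n : ℝ≥0∞) + 1 := by
            rw [show ((m : ℝ) + ((n : ℝ) + 1)) - (m : ℝ) = ((n + 1 : ℕ) : ℝ) by push_cast; ring,
              ENNReal.ofReal_natCast]
            push_cast
            ring
          have hle : avg n j (τ^[m] x) ≤
              (∫⁻ y in Set.Icc ((m : ℝ)) ((m : ℝ) + ((n : ℝ) + 1)), ENNReal.ofReal |g j y|)
                / ENNReal.ofReal (((m : ℝ) + ((n : ℝ) + 1)) - (m : ℝ)) := by
            rw [havg_eq, hden]
            exact ENNReal.div_le_div hIcc le_rfl
          refine le_trans hle ?_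
          rw [hlMax]
          refine le_iSup_of_le ((m : ℝ)) ?_
          refine le_iSup_of_le ((m : ℝ) + ((n : ℝ) + 1)) ?_
          refine le_iSup_of_le ht.1 ?_
          refine le_iSup_of_le (le_trans ht.2.le (by linarith [Nat.cast_nonneg (α := ℝ) n])) ?_
          exact le_iSup_of_le (by linarith [Nat.cast_nonneg (α := ℝ) n]) le_rfl
        have hTle : TN N (τ^[m] x) ≤ (∑' j, hlMax (g j) t ^ r) ^ (1 / r) := by
          apply ENNReal.rpow_le_rpow _ hrinv.le
          exact ENNReal.tsum_le_tsum fun j => ENNReal.rpow_le_rpow (hmain j) hr0.le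
        exact lt_of_lt_of_le hmem hTle
      -- counting
      set T : Finset ℕ := (Finset.range L).filter (fun m => τ^[m] x ∈ E N) with hT_def
      have hcount : (∑ m ∈ Finset.range L, (E N).indicator (fun _ => (1 : ℝ≥0∞)) (τ^[m] x))
          = (T.card : ℝ≥0∞) := by
        rw [hT_def]
        simp [Set.indicator_apply, Finset.sum_boole]
        convert Finset.sum_boole (fun m => τ^[m] x ∈ E N) (Finset.range L)
      have hvol : (T.card : ℝ≥0∞) ≤
          volume {t : ℝ | ENNReal.ofReal lam < (∑' j, hlMax (g j) t ^ r) ^ (1 / r)} := by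
        have hsub : (⋃ m ∈ T, Set.Ico ((m : ℝ)) ((m : ℝ) + 1)) ⊆
            {t : ℝ | ENNReal.ofReal lam < (∑' j, hlMax (g j) t ^ r) ^ (1 / r)} := by
          intro t ht
          simp only [Set.mem_iUnion] at ht
          obtain ⟨m, hmT, htm⟩ := ht
          rw [hT_def, Finset.mem_filter, Finset.mem_range] at hmT
          exact hlb m hmT.1 hmT.2 htm
        calc (T.card : ℝ≥0∞) = ∑ m ∈ T, volume (Set.Ico ((m : ℝ)) ((m : ℝ) + 1)) := by
              simp [Real.volume_Ico]
          _ = volume (⋃ m ∈ T, Set.Ico ((m : ℝ)) ((m : ℝ) + 1)) :=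
              (measure_biUnion_finset
                (fun i _ k _ hik => unit_Ico_disjoint i k hik)
                (fun m _ => measurableSet_Ico)).symm
          _ ≤ _ := measure_mono hsub
      -- the Lebesgue integral of the vector norm of g
      have hint : (∫⁻ t, (∑' j, ENNReal.ofReal |g j t| ^ r) ^ (1 / r))
          = ∑ m ∈ Finset.range M, F (τ^[m] x) := by
        have hind : (fun t => (∑' j, ENNReal.ofReal |g j t| ^ r) ^ (1 / r))
            = (Set.Ico (0 : ℝ) (M : ℝ)).indicator
                (fun t => (∑' j, ENNReal.ofReal |g j t| ^ r) ^ (1 / r)) := by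
          funext t
          by_cases ht : t ∈ Set.Ico (0 : ℝ) (M : ℝ)
          · rw [Set.indicator_of_mem ht]
          · rw [Set.indicator_of_notMem ht]
            have hg0 : ∀ j, g j t = 0 := fun j => Set.indicator_of_notMem ht _
            simp [hg0, ENNReal.zero_rpow_of_pos, hr0, hrinv]
        rw [hind, lintegral_indicator measurableSet_Ico]
        have := stepfun_lintegral (fun t => (∑' j, ENNReal.ofReal |g j t| ^ r) ^ (1 / r))
          (fun m => F (τ^[m] x)) M 0 ?_
        · simpa using this
        · intro k hk t' ht'
          have hval : ∀ j, g j t' = f j (τ^[k] x) := fun j =>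
            hgval j k (by omega) t' (by simpa using ht')
          show (∑' j, ENNReal.ofReal |g j t'| ^ r) ^ (1 / r) = F (τ^[0 + k] x)
          simp only [hval, Nat.zero_add]
          rfl
      -- put it together
      have happ := hyp g hgmeas lam hlam
      rw [hint] at happ
      rw [hcount]
      exact le_trans hvol happ
    -- integrate the pointwise estimate
    have hLHS : ∫⁻ x, (∑ m ∈ Finset.range L, (E N).indicator (fun _ => (1 : ℝ≥0∞)) (τ^[m] x)) ∂μ
        = (L : ℝ≥0∞) * μ (E N) := by
      have hmeas1 : ∀ m : ℕ, Measurable fun x => (E N).indicator (fun _ => (1 : ℝ≥0∞)) (τ^[m] x) :=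
        fun m => (measurable_const.indicator (hEmeas N)).comp ((hτ.iterate m).measurable)
      rw [lintegral_finset_sum _ (fun m _ => hmeas1 m)]
      have heach : ∀ m : ℕ, ∫⁻ x, (E N).indicator (fun _ => (1 : ℝ≥0∞)) (τ^[m] x) ∂μ
          = μ (E N) := by
        intro m
        rw [(hτ.iterate m).lintegral_comp (measurable_const.indicator (hEmeas N)),
          lintegral_indicator (hEmeas N), setLIntegral_one]
      simp [heach, Finset.sum_const, Finset.card_range, nsmul_eq_mul]
    have hRHS : ∫⁻ x, c * ∑ m ∈ Finset.range (L + N + 1), F (τ^[m] x) ∂μ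
        = c * (((L + N + 1 : ℕ) : ℝ≥0∞) * I) := by
      have hmeas2 : ∀ m : ℕ, Measurable fun x => F (τ^[m] x) :=
        fun m => hFmeas.comp (hτ.iterate m).measurable
      rw [lintegral_const_mul c (Finset.measurable_sum _ fun m _ => hmeas2 m)]
      congr 1
      rw [lintegral_finset_sum _ (fun m _ => hmeas2 m)]
      have heach : ∀ m : ℕ, ∫⁻ x, F (τ^[m] x) ∂μ = I :=
        fun m => (hτ.iterate m).lintegral_comp hFmeas
      simp [heach, Finset.sum_const, Finset.card_range, nsmul_eq_mul]
    calc (L : ℝ≥0∞) * μ (E N)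
        = ∫⁻ x, (∑ m ∈ Finset.range L, (E N).indicator (fun _ => (1 : ℝ≥0∞)) (τ^[m] x)) ∂μ :=
          hLHS.symm
      _ ≤ ∫⁻ x, c * ∑ m ∈ Finset.range (L + N + 1), F (τ^[m] x) ∂μ := lintegral_mono point
      _ = c * (((L + N + 1 : ℕ) : ℝ≥0∞) * I) := hRHS
      _ = ((L : ℝ≥0∞) + ((N + 1 : ℕ) : ℝ≥0∞)) * (c * I) := by
          push_cast
          ring
  -- conclude via monotone convergence of sets
  have hsub : {x : X | ENNReal.ofReal lam < (∑' j, ergMax τ (f j) x ^ r) ^ (1 / r)}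
      ⊆ ⋃ N, E N := by
    intro x hx
    have h2 : (∑' j, ergMax τ (f j) x ^ r) ^ (1 / r) = ⨆ N, TN N x := by
      have e1 : ∀ j, ergMax τ (f j) x ^ r = ⨆ N, S N j x ^ r := by
        intro j
        rw [herg j x]
        have h1 : (⨆ n, avg n j x) = ⨆ N, S N j x := by
          apply le_antisymm
          · exact iSup_le fun n => le_iSup_of_le n (le_iSup₂_of_le n le_rfl le_rfl)
          · exact iSup_le fun N => iSup₂_le fun n _ => le_iSup (fun n => avg n j x) n
        rw [h1, rpow_iSup _ hr0]
      calc (∑' j, ergMax τ (f j) x ^ r) ^ (1 / r)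
          = (∑' j, ⨆ N, S N j x ^ r) ^ (1 / r) := by
            congr 1; exact tsum_congr e1
        _ = (⨆ N, ∑' j, S N j x ^ r) ^ (1 / r) := by
            rw [tsum_iSup_mono (fun N j => S N j x ^ r)
              (fun N N' h j => ENNReal.rpow_le_rpow (hSmono j x h) hr0.le)]
        _ = ⨆ N, TN N x := rpow_iSup _ hrinv
    rw [Set.mem_setOf_eq, h2, lt_iSup_iff] at hx
    obtain ⟨N, hN⟩ := hx
    exact Set.mem_iUnion.2 ⟨N, hN⟩
  calc μ {x : X | ENNReal.ofReal lam < (∑' j, ergMax τ (f j) x ^ r) ^ (1 / r)}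
      ≤ μ (⋃ N, E N) := measure_mono hsub
    _ = ⨆ N, μ (E N) := Directed.measure_iUnion
        (directed_of_isDirected_le fun N N' h =>
          fun y hy => lt_of_lt_of_le hy (ENNReal.rpow_le_rpow
            (ENNReal.tsum_le_tsum fun j => ENNReal.rpow_le_rpow (hSmono j y h) hr0.le) hrinv.le))
    _ ≤ c * I := iSup_le key
end

section
/- For every 1 < r < ∞, every measure-preserving transformation τ of a probability space (X, μ), every sequence (f_j) of integrable functions on X, and every λ > 0: μ{x ∈ X : (∑_j (M♯ f_j(x))^r)^{1/r} > λ} ≤ (C_r/λ) ∫_X (∑_j |f_j(x)|^r)^{1/r} dμ(x), where C_r is the constant in the weak type (1,1) Fefferman–Stein inequality on ℝ. -/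
open MeasureTheory ENNReal

/-! ### Auxiliary definitions and lemmas for the Calderón transference argument -/

/-- Truncated ergodic maximal function. -/
noncomputable def ergMaxT (L : ℕ) {X : Type*} (τ : X → X) (f : X → ℝ) (x : X) : ℝ≥0∞ :=
  ⨆ n ∈ Finset.range (L + 1),
    (∑ k ∈ Finset.range (n + 1), ENNReal.ofReal |f (τ^[k] x)|) / (n + 1)

lemma ergMaxT_mono {X : Type*} (τ : X → X) (f : X → ℝ) (x : X) :
    Monotone (fun L => ergMaxT L τ f x) := by
  intro L L' h
  exact iSup_le fun n => iSup_le fun hn =>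
    le_iSup₂_of_le n (Finset.range_subset_range.2 (by omega) hn) le_rfl

lemma ergMax_eq_iSup {X : Type*} (τ : X → X) (f : X → ℝ) (x : X) :
    ergMax τ f x = ⨆ L, ergMaxT L τ f x := by
  apply le_antisymm
  · exact iSup_le fun n => le_iSup_of_le n (le_iSup₂_of_le n (Finset.self_mem_range_succ n) le_rfl)
  · exact iSup_le fun L => iSup_le fun n => iSup_le fun _ =>
      le_iSup (fun n : ℕ => (∑ k ∈ Finset.range (n + 1), ENNReal.ofReal |f (τ^[k] x)|) / (n + 1)) n

lemma iSup_rpow {g : ℕ → ℝ≥0∞} {r : ℝ} (hr : 0 < r) :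
    (⨆ n, g n) ^ r = ⨆ n, g n ^ r := by
  apply le_antisymm
  · have h1 : ∀ n, g n ≤ (⨆ n, g n ^ r) ^ (1 / r) := fun n => by
      calc g n = (g n ^ r) ^ (1 / r) := by
            rw [← ENNReal.rpow_mul, mul_one_div_cancel hr.ne', ENNReal.rpow_one]
        _ ≤ _ := ENNReal.rpow_le_rpow (le_iSup (fun n => g n ^ r) n) (by positivity)
    calc (⨆ n, g n) ^ r ≤ ((⨆ n, g n ^ r) ^ (1 / r)) ^ r :=
          ENNReal.rpow_le_rpow (iSup_le h1) hr.le
      _ = ⨆ n, g n ^ r := by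
          rw [← ENNReal.rpow_mul, one_div_mul_cancel hr.ne', ENNReal.rpow_one]
  · exact iSup_le fun n => ENNReal.rpow_le_rpow (le_iSup g n) hr.le

lemma tsum_iSup_swap_s4 {b : ℕ → ℕ → ℝ≥0∞} (hb : ∀ j, Monotone (b · j)) :
    ∑' j, ⨆ L, b L j = ⨆ L, ∑' j, b L j := by
  rw [← lintegral_count]
  rw [lintegral_iSup (fun L => measurable_from_nat) (fun L L' h j => hb j h)]
  simp [lintegral_count]

/-- Transfer of the family `g` along the orbit of `x`, supported on `[0, M)`. -/
noncomputable def transferFn {X : Type*} (τ : X → X) (g : ℕ → X → ℝ) (x : X)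
    (M : ℕ) (j : ℕ) (t : ℝ) : ℝ :=
  (Set.Ico (0:ℝ) (M:ℝ)).indicator (fun t => g j (τ^[⌊t⌋₊] x)) t

section Transfer
variable {X : Type*} (τ : X → X) (g : ℕ → X → ℝ) (x : X)

lemma transferFn_eval {M k : ℕ} (hk : k < M) {t : ℝ}
    (ht : t ∈ Set.Ico ((k:ℕ):ℝ) ((k:ℕ)+1)) (j : ℕ) :
    transferFn τ g x M j t = g j (τ^[k] x) := by
  obtain ⟨h1, h2⟩ := ht
  have h0 : (0:ℝ) ≤ t := le_trans (by positivity) h1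
  have hM : t < (M:ℝ) := lt_of_lt_of_le h2 (by exact_mod_cast Nat.succ_le_of_lt hk)
  have hfl : ⌊t⌋₊ = k := (Nat.floor_eq_iff h0).2 ⟨h1, h2⟩
  simp [transferFn, Set.indicator_of_mem (Set.mem_Ico.2 ⟨h0, hM⟩), hfl]

lemma transfer_integral (r : ℝ) (hr : 0 < r) (M : ℕ) :
    ∫⁻ t, (∑' j, ENNReal.ofReal |transferFn τ g x M j t| ^ r) ^ (1/r)
      = ∑ k ∈ Finset.range M, (∑' j, ENNReal.ofReal |g j (τ^[k] x)| ^ r) ^ (1/r) := by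
  set G : ℕ → ℝ≥0∞ := fun k => (∑' j, ENNReal.ofReal |g j (τ^[k] x)| ^ r) ^ (1/r) with hG
  have key : ∀ t : ℝ, (∑' j, ENNReal.ofReal |transferFn τ g x M j t| ^ r) ^ (1/r)
      = ∑ k ∈ Finset.range M, (Set.Ico ((k:ℕ):ℝ) ((k:ℕ)+1)).indicator (fun _ => G k) t := by
    intro t
    by_cases htM : t ∈ Set.Ico (0:ℝ) (M:ℝ)
    · set k := ⌊t⌋₊ with hk
      have hkM : k < M := (Nat.floor_lt htM.1).2 htM.2
      have htk : t ∈ Set.Ico ((k:ℕ):ℝ) ((k:ℕ)+1) :=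
        ⟨Nat.floor_le htM.1, Nat.lt_floor_add_one t⟩
      have hL : (∑' j, ENNReal.ofReal |transferFn τ g x M j t| ^ r) ^ (1/r) = G k := by
        rw [hG]
        congr 1
        exact tsum_congr fun j => by rw [transferFn_eval τ g x hkM htk j]
      rw [hL, Finset.sum_eq_single_of_mem k (Finset.mem_range.2 hkM)]
      · exact (Set.indicator_of_mem htk (fun _ => G k)).symm
      · intro k' _ hk'
        apply Set.indicator_of_notMem
        intro htk'
        exact hk' (((Nat.floor_eq_iff (le_trans (by positivity) htk'.1)).2
          ⟨htk'.1, htk'.2⟩).symm ▸ hk)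
    · have hL : ∀ j, transferFn τ g x M j t = 0 := fun j => Set.indicator_of_notMem htM _
      have : (∑' j, ENNReal.ofReal |transferFn τ g x M j t| ^ r) = 0 := by
        simp [hL, ENNReal.zero_rpow_of_pos hr]
      rw [this, ENNReal.zero_rpow_of_pos (by positivity)]
      symm
      apply Finset.sum_eq_zero
      intro k hkM
      apply Set.indicator_of_notMem
      intro htk
      exact htM ⟨le_trans (by positivity) htk.1,
        lt_of_lt_of_le htk.2 (by exact_mod_cast Nat.succ_le_of_lt (Finset.mem_range.1 hkM))⟩
  calc ∫⁻ t, (∑' j, ENNReal.ofReal |transferFn τ g x M j t| ^ r) ^ (1/r)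
      = ∫⁻ t, ∑ k ∈ Finset.range M, (Set.Ico ((k:ℕ):ℝ) ((k:ℕ)+1)).indicator (fun _ => G k) t := by
        exact lintegral_congr key
    _ = ∑ k ∈ Finset.range M, ∫⁻ t, (Set.Ico ((k:ℕ):ℝ) ((k:ℕ)+1)).indicator (fun _ => G k) t := by
        exact lintegral_finset_sum _ fun k _ => (measurable_const.indicator measurableSet_Ico)
    _ = ∑ k ∈ Finset.range M, G k := by
        apply Finset.sum_congr rfl
        intro k _
        rw [lintegral_indicator measurableSet_Ico, setLIntegral_const, Real.volume_Ico]
        simp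

lemma ergMaxT_le_hlMax (L N : ℕ) {k : ℕ} (hk : k < N) {t : ℝ}
    (ht : t ∈ Set.Ico ((k:ℕ):ℝ) ((k:ℕ)+1)) (j : ℕ) :
    ergMaxT L τ (g j) (τ^[k] x) ≤ hlMax (transferFn τ g x (N+L) j) t := by
  apply iSup₂_le
  intro n hn
  have hnL : n ≤ L := Nat.lt_succ_iff.1 (Finset.mem_range.1 hn)
  set a : ℝ := (k:ℝ) with ha
  set b : ℝ := (k:ℝ) + (n+1) with hb
  have hat : a ≤ t := ht.1
  have hcast : ∀ p q : ℕ, p < q → ((p:ℝ) + 1 ≤ (q:ℝ)) := fun p q h => by exact_mod_cast h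
  have htb : t ≤ b := le_of_lt (lt_of_lt_of_le ht.2
    (by rw [hb]; have : (0:ℝ) ≤ n := Nat.cast_nonneg n; linarith))
  have hab : a < b := by
    rw [ha, hb]; have : (0:ℝ) ≤ n := Nat.cast_nonneg n; linarith
  have key : (∑ m ∈ Finset.range (n + 1), ENNReal.ofReal |g j (τ^[m] (τ^[k] x))|) / (n + 1)
      ≤ (∫⁻ y in Set.Icc a b, ENNReal.ofReal |transferFn τ g x (N+L) j y|) /
          ENNReal.ofReal (b - a) := by
    have hba : ENNReal.ofReal (b - a) = (n:ℝ≥0∞) + 1 := by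
      rw [ha, hb]
      rw [show (k:ℝ) + (n+1) - k = ((n+1:ℕ):ℝ) by push_cast; ring]
      rw [ENNReal.ofReal_natCast]
      push_cast; ring
    rw [hba]
    apply ENNReal.div_le_div_right
    calc ∑ m ∈ Finset.range (n + 1), ENNReal.ofReal |g j (τ^[m] (τ^[k] x))|
        = ∑ m ∈ Finset.range (n + 1),
            ∫⁻ y in Set.Ico ((k+m:ℕ):ℝ) ((k+m:ℕ)+1),
              ENNReal.ofReal |transferFn τ g x (N+L) j y| := by
          apply Finset.sum_congr rfl
          intro m hm
          have hmn : m ≤ n := Nat.lt_succ_iff.1 (Finset.mem_range.1 hm)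
          have hkm : k + m < N + L := by omega
          rw [setLIntegral_congr_fun measurableSet_Ico
            (fun y hy => by
              rw [transferFn_eval τ g x hkm hy j])]
          rw [setLIntegral_const, Real.volume_Ico]
          have : ((k+m:ℕ):ℝ) + 1 - ((k+m:ℕ):ℝ) = 1 := by ring
          rw [this]
          simp [← Function.iterate_add_apply, Nat.add_comm m k]
      _ = ∫⁻ y in ⋃ m ∈ Finset.range (n+1), Set.Ico ((k+m:ℕ):ℝ) ((k+m:ℕ)+1),
            ENNReal.ofReal |transferFn τ g x (N+L) j y| := by
          rw [lintegral_biUnion_finset ?hd (fun m _ => measurableSet_Ico)]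
          intro m _ m' _ hmm'
          apply Set.Ico_disjoint_Ico.2
          rcases Nat.lt_or_ge m m' with h | h
          · exact min_le_of_left_le
              (le_trans (hcast (k+m) (k+m') (by omega)) (le_max_right _ _))
          · have h' : m' < m := lt_of_le_of_ne h (Ne.symm hmm')
            exact min_le_of_right_le
              (le_trans (hcast (k+m') (k+m) (by omega)) (le_max_left _ _))
      _ ≤ ∫⁻ y in Set.Icc a b, ENNReal.ofReal |transferFn τ g x (N+L) j y| := by
          apply lintegral_mono_set
          apply Set.iUnion₂_subset
          intro m hm
          have hmn : m ≤ n := Nat.lt_succ_iff.1 (Finset.mem_range.1 hm)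
          intro y hy
          have h1 : a ≤ ((k+m:ℕ):ℝ) := by rw [ha]; exact_mod_cast Nat.le_add_right k m
          have h2 : ((k+m:ℕ):ℝ) + 1 ≤ b := by
            rw [hb]; push_cast
            have : (m:ℝ) ≤ n := by exact_mod_cast hmn
            linarith
          exact ⟨le_trans h1 hy.1, le_trans hy.2.le h2⟩
  refine le_trans key ?_
  exact le_iSup_of_le a (le_iSup_of_le b (le_iSup_of_le hat (le_iSup_of_le htb
    (le_iSup_of_le hab le_rfl))))

end Transfer

/-- The transference result for measurable functions. -/
lemma key_measurable (r : ℝ) (hr : 1 < r) (C : ℝ)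
    (hFS : ∀ f : ℕ → ℝ → ℝ, (∀ j, Measurable (f j)) → ∀ lam : ℝ, 0 < lam →
      volume {t : ℝ | ENNReal.ofReal lam < (∑' j, hlMax (f j) t ^ r) ^ (1 / r)}
        ≤ (ENNReal.ofReal C / ENNReal.ofReal lam) *
            ∫⁻ t, (∑' j, ENNReal.ofReal |f j t| ^ r) ^ (1 / r))
    {X : Type*} [MeasurableSpace X] (μ : Measure X) [IsProbabilityMeasure μ]
    (τ : X → X) (hτ : MeasurePreserving τ μ μ)
    (g : ℕ → X → ℝ) (hg : ∀ j, Measurable (g j))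
    (lam : ℝ) (hlam : 0 < lam) :
    μ {x : X | ENNReal.ofReal lam < (∑' j, ergMax τ (g j) x ^ r) ^ (1 / r)}
      ≤ (ENNReal.ofReal C / ENNReal.ofReal lam) *
          ∫⁻ x, (∑' j, ENNReal.ofReal |g j x| ^ r) ^ (1 / r) ∂μ := by
  classical
  have hr0 : 0 < r := lt_trans one_pos hr
  have h1r : 0 < 1 / r := by positivity
  set K := ENNReal.ofReal C / ENNReal.ofReal lam with hK
  set G : X → ℝ≥0∞ := fun y => (∑' j, ENNReal.ofReal |g j y| ^ r) ^ (1 / r) with hGdef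
  have hGmeas : Measurable G :=
    (Measurable.ennreal_tsum fun j =>
      (ENNReal.measurable_ofReal.comp (hg j).abs).pow_const r).pow_const (1/r)
  set I := ∫⁻ y, G y ∂μ with hI
  set SL : ℕ → X → ℝ≥0∞ := fun L y => (∑' j, ergMaxT L τ (g j) y ^ r) ^ (1 / r) with hSL
  have hSLmeas : ∀ L, Measurable (SL L) := by
    intro L
    apply Measurable.pow_const
    apply Measurable.ennreal_tsum
    intro j
    apply Measurable.pow_const
    apply Measurable.iSup; intro n; apply Measurable.iSup; intro _
    exact (Finset.measurable_sum _ fun k _ =>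
      ENNReal.measurable_ofReal.comp (((hg j).comp (hτ.measurable.iterate k)).abs)).div_const _
  set E : ℕ → Set X := fun L => {y | ENNReal.ofReal lam < SL L y} with hE
  have hEmeas : ∀ L, MeasurableSet (E L) := fun L =>
    measurableSet_lt measurable_const (hSLmeas L)
  have main : ∀ L N : ℕ, (N : ℝ≥0∞) * μ (E L) ≤ K * ((N + L : ℕ) : ℝ≥0∞) * I := by
    intro L N
    have point : ∀ x : X,
        ∑ k ∈ Finset.range N, (E L).indicator (fun _ => (1:ℝ≥0∞)) (τ^[k] x)
          ≤ K * ∑ k ∈ Finset.range (N + L), G (τ^[k] x) := by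
      intro x
      have humeas : ∀ j, Measurable (transferFn τ g x (N+L) j) := fun j =>
        ((measurable_from_nat (f := fun k => g j (τ^[k] x))).comp
          Nat.measurable_floor).indicator measurableSet_Ico
      have hvol := hFS (transferFn τ g x (N+L)) humeas lam hlam
      rw [transfer_integral τ g x r hr0 (N+L)] at hvol
      set T := {t : ℝ | ENNReal.ofReal lam <
        (∑' j, hlMax (transferFn τ g x (N+L) j) t ^ r) ^ (1 / r)} with hT
      have hsub : ∀ k, k < N → τ^[k] x ∈ E L →
          Set.Ico ((k:ℕ):ℝ) ((k:ℕ)+1) ⊆ T := by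
        intro k hk hEk t ht
        have hEk' : ENNReal.ofReal lam < SL L (τ^[k] x) := hEk
        show ENNReal.ofReal lam <
          (∑' j, hlMax (transferFn τ g x (N+L) j) t ^ r) ^ (1 / r)
        exact lt_of_lt_of_le hEk' (ENNReal.rpow_le_rpow (ENNReal.tsum_le_tsum fun j =>
          ENNReal.rpow_le_rpow (ergMaxT_le_hlMax τ g x L N hk ht j) hr0.le) h1r.le)
      set F := (Finset.range N).filter (fun k => τ^[k] x ∈ E L) with hF
      have h1 : ∑ k ∈ Finset.range N, (E L).indicator (fun _ => (1:ℝ≥0∞)) (τ^[k] x)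
          = (F.card : ℝ≥0∞) := by
        have hind : ∀ k, (E L).indicator (fun _ => (1:ℝ≥0∞)) (τ^[k] x)
            = if τ^[k] x ∈ E L then (1:ℝ≥0∞) else 0 := fun k => Set.indicator_apply _ _ _
        simp only [hind]
        rw [Finset.sum_ite, Finset.sum_const, Finset.sum_const, hF]
        simp
      have h2 : (F.card : ℝ≥0∞) ≤ volume T := by
        have hdisj : (↑F : Set ℕ).PairwiseDisjoint
            (fun k : ℕ => Set.Ico ((k:ℕ):ℝ) ((k:ℕ)+1)) := by
          intro m _ m' _ hmm'
          simp only [Function.onFun]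
          apply Set.Ico_disjoint_Ico.2
          rcases Nat.lt_or_ge m m' with h | h
          · exact min_le_of_left_le (le_trans (by exact_mod_cast h) (le_max_right _ _))
          · have h' : m' < m := lt_of_le_of_ne h (Ne.symm hmm')
            exact min_le_of_right_le (le_trans (by exact_mod_cast h') (le_max_left _ _))
        calc (F.card : ℝ≥0∞)
            = volume (⋃ k ∈ F, Set.Ico ((k:ℕ):ℝ) ((k:ℕ)+1)) := by
              rw [measure_biUnion_finset hdisj (fun _ _ => measurableSet_Ico)]
              simp [Real.volume_Ico]
          _ ≤ volume T := by
              apply measure_mono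
              apply Set.iUnion₂_subset
              intro k hk
              exact hsub k (Finset.mem_range.1 (Finset.mem_filter.1 hk).1)
                (Finset.mem_filter.1 hk).2
      rw [h1]
      exact le_trans h2 hvol
    have lhs_eq : ∫⁻ y, ∑ k ∈ Finset.range N,
        (E L).indicator (fun _ => (1:ℝ≥0∞)) (τ^[k] y) ∂μ = (N : ℝ≥0∞) * μ (E L) := by
      have hm : ∀ k : ℕ, Measurable fun y : X =>
          (E L).indicator (fun _ => (1:ℝ≥0∞)) (τ^[k] y) := fun k =>
        (measurable_const.indicator (hEmeas L)).comp (hτ.measurable.iterate k)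
      rw [lintegral_finset_sum _ (fun k _ => hm k)]
      have heach : ∀ k, ∫⁻ y, (E L).indicator (fun _ => (1:ℝ≥0∞)) (τ^[k] y) ∂μ = μ (E L) := by
        intro k
        exact ((hτ.iterate k).lintegral_comp
          (measurable_const.indicator (hEmeas L))).trans (lintegral_indicator_one (hEmeas L))
      simp only [heach, Finset.sum_const, Finset.card_range, nsmul_eq_mul]
    have rhs_eq : ∫⁻ y, K * ∑ k ∈ Finset.range (N+L), G (τ^[k] y) ∂μ
        = K * ((N + L : ℕ) : ℝ≥0∞) * I := by
      have hmG : ∀ k : ℕ, Measurable fun y : X => G (τ^[k] y) := fun k =>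
        hGmeas.comp (hτ.measurable.iterate k)
      rw [lintegral_const_mul K (Finset.measurable_sum _ fun k _ => hmG k)]
      rw [lintegral_finset_sum _ (fun k _ => hmG k)]
      have heach : ∀ k, ∫⁻ y, G (τ^[k] y) ∂μ = I := fun k =>
        (hτ.iterate k).lintegral_comp hGmeas
      simp only [heach, Finset.sum_const, Finset.card_range, nsmul_eq_mul, mul_assoc]
    calc (N : ℝ≥0∞) * μ (E L) = _ := lhs_eq.symm
      _ ≤ _ := lintegral_mono point
      _ = _ := rhs_eq
  have perL : ∀ L, μ (E L) ≤ K * I := by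
    intro L
    rcases eq_top_or_lt_top (K * I) with hKI | hKI
    · exact hKI ▸ le_top
    apply ENNReal.le_of_forall_pos_le_add
    intro ε hε _
    have hKIne : K * I ≠ ∞ := hKI.ne
    have hεne : (ε : ℝ≥0∞) ≠ 0 := by exact_mod_cast hε.ne'
    have hc : K * I * L / (ε : ℝ≥0∞) ≠ ∞ :=
      (ENNReal.div_lt_top (ENNReal.mul_ne_top hKIne (ENNReal.natCast_ne_top L)) hεne).ne
    obtain ⟨N, hN⟩ := ENNReal.exists_nat_gt hc
    have hN0 : (N : ℝ≥0∞) ≠ 0 := by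
      have hNne : N ≠ 0 := by
        rintro rfl
        simpa using hN
      exact_mod_cast hNne
    have hKIL : K * I * L ≤ (N : ℝ≥0∞) * ε :=
      (ENNReal.div_le_iff_le_mul (Or.inl hεne) (Or.inl ENNReal.coe_ne_top)).1 hN.le
    have hmain := main L N
    have hrw : K * ((N + L : ℕ) : ℝ≥0∞) * I = (N : ℝ≥0∞) * (K * I) + K * I * L := by
      push_cast
      ring
    rw [hrw] at hmain
    have hfinal : (N : ℝ≥0∞) * μ (E L) ≤ (N : ℝ≥0∞) * (K * I + ε) := by
      calc (N : ℝ≥0∞) * μ (E L) ≤ (N : ℝ≥0∞) * (K * I) + K * I * L := hmain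
        _ ≤ (N : ℝ≥0∞) * (K * I) + (N : ℝ≥0∞) * ε := add_le_add le_rfl hKIL
        _ = (N : ℝ≥0∞) * (K * I + ε) := by ring
    exact (ENNReal.mul_le_mul_iff_right hN0 (ENNReal.natCast_ne_top N)).1 hfinal
  have hSsup : ∀ y, (∑' j, ergMax τ (g j) y ^ r) ^ (1/r) = ⨆ L, SL L y := by
    intro y
    have h1 : ∀ j, ergMax τ (g j) y ^ r = ⨆ L, ergMaxT L τ (g j) y ^ r := fun j => by
      rw [ergMax_eq_iSup, iSup_rpow hr0]
    rw [tsum_congr h1, tsum_iSup_swap_s4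
      (fun j L L' h => ENNReal.rpow_le_rpow (ergMaxT_mono τ (g j) y h) hr0.le),
      iSup_rpow h1r]
  have hSLmono : ∀ y, Monotone (fun L => SL L y) := fun y L L' h =>
    ENNReal.rpow_le_rpow (ENNReal.tsum_le_tsum fun j =>
      ENNReal.rpow_le_rpow (ergMaxT_mono τ (g j) y h) hr0.le) h1r.le
  have hset : {x : X | ENNReal.ofReal lam < (∑' j, ergMax τ (g j) x ^ r) ^ (1/r)}
      = ⋃ L, E L := by
    ext y
    simp only [Set.mem_setOf_eq, Set.mem_iUnion, hSsup y, lt_iSup_iff, hE]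
  have hdir : Directed (· ⊆ ·) E := by
    apply Monotone.directed_le
    intro L L' h y hy
    exact lt_of_lt_of_le hy (hSLmono y h)
  rw [hset, hdir.measure_iUnion]
  exact iSup_le perL

theorem ergodic_vector_valued_weak (r : ℝ) (hr : 1 < r) (C : ℝ) (hC : 0 < C)
    (hFS : ∀ f : ℕ → ℝ → ℝ, (∀ j, Measurable (f j)) → ∀ lam : ℝ, 0 < lam →
      volume {t : ℝ | ENNReal.ofReal lam < (∑' j, hlMax (f j) t ^ r) ^ (1 / r)}
        ≤ (ENNReal.ofReal C / ENNReal.ofReal lam) *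
            ∫⁻ t, (∑' j, ENNReal.ofReal |f j t| ^ r) ^ (1 / r))
    {X : Type*} [MeasurableSpace X] (μ : Measure X) [IsProbabilityMeasure μ]
    (τ : X → X) (hτ : MeasurePreserving τ μ μ)
    (f : ℕ → X → ℝ) (hf : ∀ j, Integrable (f j) μ)
    (lam : ℝ) (hlam : 0 < lam) :
    μ {x : X | ENNReal.ofReal lam < (∑' j, ergMax τ (f j) x ^ r) ^ (1 / r)}
      ≤ (ENNReal.ofReal C / ENNReal.ofReal lam) *
          ∫⁻ x, (∑' j, ENNReal.ofReal |f j x| ^ r) ^ (1 / r) ∂μ := by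
  classical
  set g : ℕ → X → ℝ := fun j => ((hf j).aemeasurable).mk (f j) with hg
  have hgmeas : ∀ j, Measurable (g j) := fun j => ((hf j).aemeasurable).measurable_mk
  have hae : ∀ᵐ x ∂μ, ∀ p : ℕ × ℕ, f p.1 (τ^[p.2] x) = g p.1 (τ^[p.2] x) := by
    rw [ae_all_iff]
    intro p
    have := (hτ.iterate p.2).quasiMeasurePreserving.ae_eq_comp
      ((hf p.1).aemeasurable.ae_eq_mk)
    exact this.mono fun x hx => hx
  have hS : ∀ᵐ x ∂μ, (∑' j, ergMax τ (f j) x ^ r) ^ (1 / r)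
      = (∑' j, ergMax τ (g j) x ^ r) ^ (1 / r) := by
    refine hae.mono fun x hx => ?_
    congr 1
    apply tsum_congr
    intro j
    congr 1
    unfold ergMax
    apply iSup_congr
    intro n
    congr 1
    apply Finset.sum_congr rfl
    intro k _
    rw [hx (j, k)]
  have hInt : ∫⁻ x, (∑' j, ENNReal.ofReal |f j x| ^ r) ^ (1 / r) ∂μ
      = ∫⁻ x, (∑' j, ENNReal.ofReal |g j x| ^ r) ^ (1 / r) ∂μ := by
    apply lintegral_congr_ae
    refine hae.mono fun x hx => ?_
    show (∑' j, ENNReal.ofReal |f j x| ^ r) ^ (1 / r)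
        = (∑' j, ENNReal.ofReal |g j x| ^ r) ^ (1 / r)
    congr 1
    apply tsum_congr
    intro j
    have := hx (j, 0)
    simp only [Function.iterate_zero_apply] at this
    rw [this]
  have hmeas_eq : μ {x : X | ENNReal.ofReal lam < (∑' j, ergMax τ (f j) x ^ r) ^ (1 / r)}
      = μ {x : X | ENNReal.ofReal lam < (∑' j, ergMax τ (g j) x ^ r) ^ (1 / r)} := by
    apply measure_congr
    refine hS.mono fun x hx => ?_
    show (ENNReal.ofReal lam < (∑' j, ergMax τ (f j) x ^ r) ^ (1 / r)) =
      (ENNReal.ofReal lam < (∑' j, ergMax τ (g j) x ^ r) ^ (1 / r))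
    rw [hx]
  rw [hmeas_eq, hInt]
  exact key_measurable r hr C hFS μ τ hτ g hgmeas lam hlam
end

section
/- Discrete transfer of vector-valued weak type (1,1) bounds: Let M_N f(i) = sup_{1 ≤ n ≤ N} (1/n) ∑_{k=0}^{n-1} |f(i+k)| on ℤ. Suppose for some 1 < r < ∞ and constant C (independent of N) one has #{i ∈ ℤ : (∑_j (M_N f_j(i))^r)^{1/r} > λ} ≤ (C/λ) ∑_{i ∈ ℤ} (∑_j |f_j(i)|^r)^{1/r} for all λ > 0 and all sequences (f_j) on ℤ. Then for any measure-preserving transformation τ of a probability space (X, μ), with M♯_N f(x) = sup_{1 ≤ n ≤ N} (1/n) ∑_{k=0}^{n-1} |f(τ^k x)|, one has μ{x : (∑_j (M♯_N f_j(x))^r)^{1/r} > λ} ≤ (C/λ) ∫_X (∑_j |f_j(x)|^r)^{1/r} dμ for all λ > 0. -/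
open MeasureTheory ENNReal

/-- Truncated one-sided discrete maximal operator on `ℤ`. -/
noncomputable def dMax (N : ℕ) (f : ℤ → ℝ) (i : ℤ) : ℝ≥0∞ :=
  ⨆ n ∈ Finset.Icc 1 N, (∑ k ∈ Finset.range n, ENNReal.ofReal |f (i + k)|) / (n : ℝ≥0∞)

/-- Truncated ergodic maximal operator. -/
noncomputable def ergMaxN {X : Type*} (τ : X → X) (N : ℕ) (f : X → ℝ) (x : X) : ℝ≥0∞ :=
  ⨆ n ∈ Finset.Icc 1 N, (∑ k ∈ Finset.range n, ENNReal.ofReal |f (τ^[k] x)|) / (n : ℝ≥0∞)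

private lemma dMax_eq_erg {X : Type*} (τ : X → X) (N L : ℕ) (fj : X → ℝ) (x : X) (i : ℤ)
    (hi0 : 0 ≤ i) (hiL : i < L) :
    dMax N (fun i' => if 0 ≤ i' ∧ i' < (L : ℤ) + N then fj (τ^[i'.toNat] x) else 0) i
      = ergMaxN τ N fj (τ^[i.toNat] x) := by
  unfold dMax ergMaxN
  apply biSup_congr
  intro n hn
  rw [Finset.mem_Icc] at hn
  congr 1
  apply Finset.sum_congr rfl
  intro k hk
  rw [Finset.mem_range] at hk
  congr 1
  have hcond : 0 ≤ i + (k:ℤ) ∧ i + (k:ℤ) < (L:ℤ) + N := by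
    constructor
    · omega
    · have : (k:ℤ) < N := by exact_mod_cast lt_of_lt_of_le hk (by exact_mod_cast hn.2)
      omega
  show |(if 0 ≤ i + (k:ℤ) ∧ i + (k:ℤ) < (L:ℤ) + N then fj (τ^[(i + (k:ℤ)).toNat] x) else 0)| = _
  rw [if_pos hcond]
  congr 1
  have : (i + (k:ℤ)).toNat = k + i.toNat := by omega
  rw [this, Function.iterate_add_apply]

private lemma real_limit_aux {a b : ℝ} (N : ℕ) (_hb : 0 ≤ b)
    (h : ∀ L : ℕ, (L:ℝ) * a ≤ ((L:ℝ) + N) * b) : a ≤ b := by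
  by_contra hcon
  push_neg at hcon
  obtain ⟨L, hL⟩ := exists_nat_gt ((N : ℝ) * b / (a - b))
  have h1 := h L
  have h2 : (N:ℝ) * b < L * (a - b) := (div_lt_iff₀ (sub_pos.mpr hcon)).mp hL
  nlinarith

/-- Discrete transfer of vector-valued weak type `(1,1)` bounds. -/
theorem discrete_transfer_weak (r : ℝ) (hr : 1 < r) (C : ℝ) (hC : 0 < C)
    (hyp : ∀ N : ℕ, ∀ f : ℕ → ℤ → ℝ, ∀ lam : ℝ, 0 < lam →
      Measure.count {i : ℤ | ENNReal.ofReal lam < (∑' j, dMax N (f j) i ^ r) ^ (1 / r)}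
        ≤ (ENNReal.ofReal C / ENNReal.ofReal lam) *
            ∑' i : ℤ, (∑' j, ENNReal.ofReal |f j i| ^ r) ^ (1 / r))
    {X : Type*} [MeasurableSpace X] (μ : Measure X) [IsProbabilityMeasure μ]
    (τ : X → X) (hτ : MeasurePreserving τ μ μ)
    (f : ℕ → X → ℝ) (hf : ∀ j, Measurable (f j)) (N : ℕ)
    (lam : ℝ) (hlam : 0 < lam) :
    μ {x : X | ENNReal.ofReal lam < (∑' j, ergMaxN τ N (f j) x ^ r) ^ (1 / r)}
      ≤ (ENNReal.ofReal C / ENNReal.ofReal lam) *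
          ∫⁻ x, (∑' j, ENNReal.ofReal |f j x| ^ r) ^ (1 / r) ∂μ := by
  have hr0 : (0:ℝ) < r := one_pos.trans hr
  have hrinv : (0:ℝ) < 1 / r := by positivity
  have hτm : Measurable τ := hτ.measurable
  set F : X → ℝ≥0∞ := fun x => (∑' j, ENNReal.ofReal |f j x| ^ r) ^ (1 / r) with hFdef
  have hFm : Measurable F := by
    apply Measurable.pow_const
    apply Measurable.ennreal_tsum
    intro j
    exact (ENNReal.measurable_ofReal.comp (hf j).abs).pow_const _
  have hEm : ∀ j, Measurable (ergMaxN τ N (f j)) := by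
    intro j
    unfold ergMaxN
    apply Measurable.iSup; intro n
    apply Measurable.iSup; intro _
    apply Measurable.div _ measurable_const
    apply Finset.measurable_sum
    intro k _
    exact ENNReal.measurable_ofReal.comp (((hf j).comp (hτm.iterate k)).abs)
  set A : Set X := {x | ENNReal.ofReal lam < (∑' j, ergMaxN τ N (f j) x ^ r) ^ (1 / r)} with hAdef
  have hAm : MeasurableSet A := by
    apply measurableSet_lt measurable_const
    apply Measurable.pow_const
    apply Measurable.ennreal_tsum
    intro j
    exact (hEm j).pow_const _
  set K : ℝ≥0∞ := ENNReal.ofReal C / ENNReal.ofReal lam with hKdef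
  have hKne : K ≠ ⊤ := by
    rw [hKdef]
    exact (ENNReal.div_lt_top ENNReal.ofReal_ne_top
      (by simpa [ENNReal.ofReal_eq_zero] using hlam.not_ge)).ne
  have hKne0 : K ≠ 0 := by
    apply ENNReal.div_ne_zero.mpr
    exact ⟨by simpa [ENNReal.ofReal_eq_zero] using hC.not_ge, ENNReal.ofReal_ne_top⟩
  set I : ℝ≥0∞ := ∫⁻ x, F x ∂μ with hIdef
  show μ A ≤ K * I
  -- main estimate for each L
  have key : ∀ L : ℕ, (L : ℝ≥0∞) * μ A ≤ (((L + N : ℕ) : ℝ≥0∞)) * (K * I) := by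
    intro L
    have ptwise : ∀ x : X,
        ((((Finset.range L).filter (fun k => τ^[k] x ∈ A)).card : ℝ≥0∞))
          ≤ K * ∑ k ∈ Finset.range (L + N), F (τ^[k] x) := by
      intro x
      set g : ℕ → ℤ → ℝ :=
        fun j i' => if 0 ≤ i' ∧ i' < (L : ℤ) + N then f j (τ^[i'.toNat] x) else 0 with hgdef
      set S : Finset ℕ := (Finset.range L).filter (fun k => τ^[k] x ∈ A) with hSdef
      have h1 : (S.card : ℝ≥0∞)
          ≤ Measure.count {i : ℤ | ENNReal.ofReal lam
              < (∑' j, dMax N (g j) i ^ r) ^ (1 / r)} := by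
        have hsub : (↑(S.image (fun k : ℕ => (k : ℤ))) : Set ℤ)
            ⊆ {i : ℤ | ENNReal.ofReal lam < (∑' j, dMax N (g j) i ^ r) ^ (1 / r)} := by
          intro i hi
          simp only [Finset.coe_image, Set.mem_image, Finset.mem_coe, hSdef,
            Finset.mem_filter, Finset.mem_range] at hi
          obtain ⟨k, ⟨hkL, hkA⟩, rfl⟩ := hi
          have heq : ∀ j, dMax N (g j) (k : ℤ) = ergMaxN τ N (f j) (τ^[k] x) := by
            intro j
            have := dMax_eq_erg τ N L (f j) x (k : ℤ) (Int.ofNat_nonneg k)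
              (by exact_mod_cast hkL)
            simpa using this
          have : (∑' j, dMax N (g j) (k : ℤ) ^ r) = ∑' j, ergMaxN τ N (f j) (τ^[k] x) ^ r :=
            tsum_congr fun j => by rw [heq j]
          simp only [Set.mem_setOf_eq, this]
          exact hkA
        calc (S.card : ℝ≥0∞)
            = Measure.count (↑(S.image (fun k : ℕ => (k : ℤ))) : Set ℤ) := by
              rw [Measure.count_apply_finset,
                Finset.card_image_of_injective _ (fun a b h => by exact_mod_cast h)]
          _ ≤ _ := measure_mono hsub
      have h2 := hyp N g lam hlam
      have h3 : (∑' i : ℤ, (∑' j, ENNReal.ofReal |g j i| ^ r) ^ (1 / r))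
          = ∑ k ∈ Finset.range (L + N), F (τ^[k] x) := by
        rw [tsum_eq_sum (s := (Finset.range (L + N)).image (fun k : ℕ => (k : ℤ)))
          (by
            intro i hi
            simp only [Finset.mem_image, Finset.mem_range] at hi
            push_neg at hi
            have hz : ∀ j, g j i = 0 := by
              intro j
              rw [hgdef]
              simp only
              rw [if_neg]
              rintro ⟨h0, hLN⟩
              exact hi i.toNat (by omega) (by omega)
            have hz2 : ∀ j : ℕ, ENNReal.ofReal |g j i| ^ r = 0 := fun j => by
              rw [hz j, abs_zero, ENNReal.ofReal_zero, ENNReal.zero_rpow_of_pos hr0]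
            rw [show (∑' j, ENNReal.ofReal |g j i| ^ r) = 0 by simp [hz2],
              ENNReal.zero_rpow_of_pos hrinv]),
          Finset.sum_image (fun a _ b _ h => by exact_mod_cast h)]
        apply Finset.sum_congr rfl
        intro k hk
        rw [Finset.mem_range] at hk
        have hg' : ∀ j, g j (k : ℤ) = f j (τ^[k] x) := by
          intro j
          rw [hgdef]
          simp only
          rw [if_pos ⟨Int.ofNat_nonneg k, by exact_mod_cast hk⟩]
          simp
        rw [hFdef]
        simp only
        congr 1
        exact tsum_congr fun j => by rw [hg' j]
      calc (S.card : ℝ≥0∞) ≤ _ := h1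
        _ ≤ K * ∑' i : ℤ, (∑' j, ENNReal.ofReal |g j i| ^ r) ^ (1 / r) := h2
        _ = K * ∑ k ∈ Finset.range (L + N), F (τ^[k] x) := by rw [h3]
    have lhs_eq : ∫⁻ x, ((((Finset.range L).filter (fun k => τ^[k] x ∈ A)).card : ℝ≥0∞)) ∂μ
        = (L : ℝ≥0∞) * μ A := by
      have hcard : ∀ x : X, ((((Finset.range L).filter (fun k => τ^[k] x ∈ A)).card : ℝ≥0∞))
          = ∑ k ∈ Finset.range L, A.indicator (fun _ => (1 : ℝ≥0∞)) (τ^[k] x) := by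
        intro x
        rw [Finset.card_filter]
        push_cast
        apply Finset.sum_congr rfl
        intro k _
        by_cases h : τ^[k] x ∈ A <;> simp [Set.indicator_apply, h]
      rw [lintegral_congr hcard,
        lintegral_finset_sum (f := fun k a => A.indicator (fun _ => (1 : ℝ≥0∞)) (τ^[k] a)) _
          (fun k _ => ((measurable_one.indicator hAm).comp' (hτm.iterate k)))]
      have hone : ∀ k : ℕ, ∫⁻ x, A.indicator (fun _ => (1 : ℝ≥0∞)) (τ^[k] x) ∂μ = μ A := by
        intro k
        rw [(hτ.iterate k).lintegral_comp (f := A.indicator (fun _ => (1 : ℝ≥0∞)))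
          (measurable_one.indicator hAm)]
        exact lintegral_indicator_one hAm
      simp [hone, Finset.sum_const, nsmul_eq_mul]
    have rhs_eq : ∫⁻ x, ∑ k ∈ Finset.range (L + N), F (τ^[k] x) ∂μ
        = (((L + N : ℕ)) : ℝ≥0∞) * I := by
      rw [lintegral_finset_sum _ (fun k _ => hFm.comp' (hτm.iterate k))]
      have hone : ∀ k : ℕ, ∫⁻ x, F (τ^[k] x) ∂μ = I := fun k =>
        (hτ.iterate k).lintegral_comp hFm
      simp [hone, Finset.sum_const, nsmul_eq_mul]
    calc (L : ℝ≥0∞) * μ A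
        = ∫⁻ x, ((((Finset.range L).filter (fun k => τ^[k] x ∈ A)).card : ℝ≥0∞)) ∂μ :=
          lhs_eq.symm
      _ ≤ ∫⁻ x, K * ∑ k ∈ Finset.range (L + N), F (τ^[k] x) ∂μ := lintegral_mono ptwise
      _ = K * ∫⁻ x, ∑ k ∈ Finset.range (L + N), F (τ^[k] x) ∂μ :=
          lintegral_const_mul' _ _ hKne
      _ = K * ((((L + N : ℕ)) : ℝ≥0∞) * I) := by rw [rhs_eq]
      _ = (((L + N : ℕ)) : ℝ≥0∞) * (K * I) := by ring
  by_cases hItop : I = ⊤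
  · rw [hItop, ENNReal.mul_top hKne0]
    exact le_top
  · have hKI : K * I ≠ ⊤ := ENNReal.mul_ne_top hKne hItop
    have hμA : μ A ≠ ⊤ := measure_ne_top μ A
    have hab : ∀ L : ℕ, (L : ℝ) * (μ A).toReal ≤ ((L : ℝ) + N) * (K * I).toReal := by
      intro L
      have h := key L
      have := (ENNReal.toReal_le_toReal (by
          exact ENNReal.mul_ne_top (ENNReal.natCast_ne_top L) hμA)
        (ENNReal.mul_ne_top (ENNReal.natCast_ne_top (L + N)) hKI)).mpr h
      rw [ENNReal.toReal_mul, ENNReal.toReal_mul, ENNReal.toReal_natCast,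
        ENNReal.toReal_natCast] at this
      push_cast at this ⊢
      linarith
    have := real_limit_aux N (ENNReal.toReal_nonneg) hab
    exact (ENNReal.toReal_le_toReal hμA hKI).mp this
end
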